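/- In the dihedral Coxeter group I_2(n) = ⟨s_1, s_2 | s_1² = s_2² = (s_1 s_2)^n = e⟩ with n ≥ 2, the number of left descents d(w) equals 2 if w is the longest element w_0, equals 0 if w = e, and equals 1 otherwise. Consequently the number of proper elements of I_2(n) (elements w with ℓ(w) ≤ 2 + maxw_0(d(w)), where maxw_0(2) = n, maxw_0(1) = 1, maxw_0(0) = 0) is bounded by a constant independent of n, namely at most 8, so the proportion of proper elements tends to 0 as n → ∞. -/

import Mathlib

open Filter
open scoped Classical

open CoxeterSystem List

namespace Stmt15Aux

lemma fin2_ne {a b : Fin 2} (h : a ≠ b) : a = 1 - b := by revert h; revert a b; decide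

variable {W : Type*} [Group W] {m : ℕ} (cs : CoxeterSystem (CoxeterMatrix.I m) W)

lemma Mval (i j : Fin 2) (h : i ≠ j) : (CoxeterMatrix.I m) i j = m + 2 := by
  show (if i = j then 1 else m + 2) = m + 2
  simp [h]

lemma chain_of_reduced : ∀ ω : List (Fin 2), cs.IsReduced ω → List.Chain' (· ≠ ·) ω := by
  intro ω
  induction ω with
  | nil => simp [List.Chain']
  | cons a t ih =>
    intro hred
    match t, ih with
    | [], _ => simp [List.Chain']
    | b :: t', ih =>
      have ht : cs.IsReduced (b :: t') := by
        have := hred.drop (j := 1)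
        simpa using this
      refine List.isChain_cons_cons.mpr ⟨?_, ih ht⟩
      intro hab
      subst hab
      have h1 : cs.wordProd (a :: a :: t') = cs.wordProd t' := by
        rw [cs.wordProd_cons, cs.wordProd_cons, cs.simple_mul_simple_cancel_left]
      have h2 := cs.length_wordProd_le t'
      have hred' := hred
      unfold CoxeterSystem.IsReduced at hred'
      rw [h1] at hred'
      simp only [List.length_cons] at hred'
      omega

lemma chain_alternating : ∀ ω : List (Fin 2), List.Chain' (· ≠ ·) ω →
    ∃ i : Fin 2, ω = CoxeterSystem.alternatingWord i (1-i) ω.length := by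
  intro ω
  induction ω with
  | nil => exact fun _ => ⟨0, rfl⟩
  | cons a t ih =>
    intro hch
    have hct : List.Chain' (· ≠ ·) t := hch.tail
    obtain ⟨i, hi⟩ := ih hct
    match t, hi, hch with
    | [], _, _ =>
      refine ⟨1 - a, ?_⟩
      have : (1 - (1 - a)) = a := by fin_cases a <;> decide
      simp [CoxeterSystem.alternatingWord, this]
    | b :: t'', hi, hch =>
      have hab : a ≠ b := (List.isChain_cons_cons.mp hch).1
      have hab' : a = 1 - b := fin2_ne hab
      rw [List.length_cons, CoxeterSystem.alternatingWord_succ'] at hi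
      obtain ⟨hb, htail⟩ := List.cons_eq_cons.mp hi
      refine ⟨i, ?_⟩
      simp only [List.length_cons]
      rw [CoxeterSystem.alternatingWord_succ' i (1-i) (t''.length+1),
        CoxeterSystem.alternatingWord_succ' i (1-i) t''.length, ← htail, ← hb]
      congr 1
      rcases Nat.even_or_odd t''.length with he | ho
      · have : ¬ Even (t''.length+1) := by simp [Nat.even_add_one, he]
        rw [if_pos he] at hb
        rw [if_neg this, hab', hb]
        fin_cases i <;> decide
      · have h1 : Even (t''.length+1) := by simpa [Nat.even_add_one] using (Nat.not_even_iff_odd.mpr ho)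
        rw [if_neg (Nat.not_even_iff_odd.mpr ho)] at hb
        rw [if_pos h1, hab', hb]

/-- every element has an alternating reduced word -/
lemma exists_alt (w : W) : ∃ i : Fin 2,
    w = cs.wordProd (CoxeterSystem.alternatingWord i (1-i) (cs.length w)) := by
  obtain ⟨ω, hred, hw⟩ := cs.exists_reduced_word' w
  obtain ⟨i, hi⟩ := chain_alternating ω (chain_of_reduced cs ω hred)
  have hlen : ω.length = cs.length w := by rw [hw]; exact hred.symm
  refine ⟨i, ?_⟩
  rw [← hlen, hw]
  exact congrArg _ hi

lemma length_le (w : W) : cs.length w ≤ m + 2 := by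
  by_contra h
  push_neg at h
  obtain ⟨i, hi⟩ := exists_alt cs w
  have hMne : i ≠ 1 - i := by fin_cases i <;> decide
  have hM : (CoxeterMatrix.I m) i (1-i) = m + 2 := Mval i (1-i) hMne
  have hnr := cs.not_isReduced_alternatingWord i (1-i)
    (by rw [hM]; omega) (by rw [hM]; omega : cs.length w > (CoxeterMatrix.I m) i (1-i))
  apply hnr
  unfold CoxeterSystem.IsReduced
  rw [← hi, CoxeterSystem.length_alternatingWord]


lemma r_pow {n : ℕ} (c : ZMod n) (k : ℕ) :
    (DihedralGroup.r c) ^ k = DihedralGroup.r ((k : ZMod n) * c) := by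
  induction k with
  | zero => simp
  | succ k ih =>
    rw [pow_succ, ih, DihedralGroup.r_mul_r]
    push_cast
    ring_nf

/-- the lift data -/
def fdef (m : ℕ) : Fin 2 → DihedralGroup (m+2) := fun i => DihedralGroup.sr (i.val : ZMod (m+2))

lemma fdef_liftable (m : ℕ) : CoxeterMatrix.IsLiftable (CoxeterMatrix.I m) (fdef m) := by
  intro i i'
  show (DihedralGroup.sr (i.val : ZMod (m+2)) * DihedralGroup.sr (i'.val : ZMod (m+2)))
      ^ ((CoxeterMatrix.I m) i i') = 1
  by_cases h : i = i'
  · subst h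
    have hM : (CoxeterMatrix.I m) i i = 1 := by
      show (if i = i then 1 else m + 2) = 1
      simp
    rw [hM, pow_one, DihedralGroup.sr_mul_sr, sub_self, DihedralGroup.one_def]
  · rw [Mval i i' h, DihedralGroup.sr_mul_sr, r_pow, ZMod.natCast_self, zero_mul,
      DihedralGroup.one_def]

/-- the homomorphism to the dihedral group -/
noncomputable def φ : W →* DihedralGroup (m+2) := cs.lift ⟨fdef m, fdef_liftable m⟩

lemma φ_simple (i : Fin 2) : φ cs (cs.simple i) = DihedralGroup.sr (i.val : ZMod (m+2)) :=
  cs.lift_apply_simple (fdef_liftable m) i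

lemma φ_alt (i i' : Fin 2) (k : ℕ) :
    φ cs (cs.wordProd (CoxeterSystem.alternatingWord i i' k)) =
      (if Even k then 1 else DihedralGroup.sr (i'.val : ZMod (m+2))) *
        DihedralGroup.r (((k/2 : ℕ) : ZMod (m+2)) * ((i'.val : ZMod (m+2)) - (i.val : ZMod (m+2)))) := by
  rw [cs.prod_alternatingWord_eq_mul_pow, map_mul, map_pow, map_mul, φ_simple, φ_simple,
    DihedralGroup.sr_mul_sr, r_pow]
  congr 1
  split <;> simp [φ_simple]

lemma keyφ (k : ℕ) (h1 : 0 < k) (h2 : k ≤ m + 2)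
    (h : φ cs (cs.wordProd (CoxeterSystem.alternatingWord 0 1 k)) =
         φ cs (cs.wordProd (CoxeterSystem.alternatingWord 1 0 k))) : k = m + 2 := by
  rw [φ_alt, φ_alt] at h
  set a : ZMod (m+2) := ((k/2 : ℕ) : ZMod (m+2)) with ha
  have hk0 : (k : ZMod (m+2)) = 0 := by
    rcases Nat.even_or_odd k with he | ho
    · rw [if_pos he, if_pos he, one_mul, one_mul] at h
      have h' := DihedralGroup.r.inj h
      simp only [Fin.val_zero, Fin.val_one, Nat.cast_zero, Nat.cast_one] at h'
      have hk : 2 * (k/2) = k := by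
        have := Nat.even_iff.mp he; omega
      calc (k : ZMod (m+2)) = ((2 * (k/2) : ℕ) : ZMod (m+2)) := by rw [hk]
        _ = 2 * a := by push_cast [ha]; ring
        _ = 0 := by linear_combination h'
    · have hno := Nat.not_even_iff_odd.mpr ho
      rw [if_neg hno, if_neg hno, DihedralGroup.sr_mul_r, DihedralGroup.sr_mul_r] at h
      have h' := DihedralGroup.sr.inj h
      simp only [Fin.val_zero, Fin.val_one, Nat.cast_zero, Nat.cast_one] at h'
      have hk : 2 * (k/2) + 1 = k := by
        have := Nat.odd_iff.mp ho; omega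
      calc (k : ZMod (m+2)) = ((2 * (k/2) + 1 : ℕ) : ZMod (m+2)) := by rw [hk]
        _ = 2 * a + 1 := by push_cast [ha]; ring
        _ = 0 := by linear_combination h'
  have hdvd : (m+2) ∣ k := (ZMod.natCast_eq_zero_iff k (m+2)).mp hk0
  exact le_antisymm h2 (Nat.le_of_dvd h1 hdvd)


lemma head_descent {w : W} {a : Fin 2} {t : List (Fin 2)}
    (hred : cs.IsReduced (a :: t)) (hw : w = cs.wordProd (a :: t)) :
    cs.IsLeftDescent w a := by
  have h1 : cs.simple a * w = cs.wordProd t := by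
    rw [hw, cs.wordProd_cons, cs.simple_mul_simple_cancel_left]
  have h2 : cs.length w = t.length + 1 := by
    rw [hw]; rw [CoxeterSystem.IsReduced] at hred; simpa using hred
  have h3 : cs.length (cs.simple a * w) ≤ t.length := by
    rw [h1]; exact cs.length_wordProd_le t
  unfold CoxeterSystem.IsLeftDescent
  omega

/-- a descent gives an alternating reduced word with that head -/
lemma descent_alt {w : W} {j : Fin 2} (h : cs.IsLeftDescent w j) :
    ∃ i : Fin 2, w = cs.wordProd (CoxeterSystem.alternatingWord i (1-i) (cs.length w)) ∧
      (CoxeterSystem.alternatingWord i (1-i) (cs.length w)).head? = some j := by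
  have hlt := h
  unfold CoxeterSystem.IsLeftDescent at hlt
  have hlen : cs.length (cs.simple j * w) + 1 = cs.length w := by
    rcases cs.length_simple_mul w j with h' | h' <;> omega
  obtain ⟨ω', hred', hw'⟩ := cs.exists_reduced_word' (cs.simple j * w)
  have hω'len : ω'.length = cs.length w - 1 := by
    rw [CoxeterSystem.IsReduced] at hred'
    rw [← hw'] at hred'
    omega
  have hπ : w = cs.wordProd (j :: ω') := by
    rw [cs.wordProd_cons, ← hw', cs.simple_mul_simple_cancel_left]
  have hredj : cs.IsReduced (j :: ω') := by
    unfold CoxeterSystem.IsReduced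
    rw [← hπ]
    simp only [List.length_cons]
    omega
  obtain ⟨i, hi⟩ := chain_alternating _ (chain_of_reduced cs _ hredj)
  have hl : (j :: ω').length = cs.length w := by simp; omega
  rw [hl] at hi
  refine ⟨i, ?_, by rw [← hi]; rfl⟩
  rw [← hi]
  exact hπ

lemma two_descent {w : W} (h0 : cs.IsLeftDescent w 0) (h1 : cs.IsLeftDescent w 1) :
    cs.length w = m + 2 := by
  obtain ⟨i0, hw0, hh0⟩ := descent_alt cs h0
  obtain ⟨i1, hw1, hh1⟩ := descent_alt cs h1
  have hne : i0 ≠ i1 := by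
    intro hcon
    rw [hcon, hh1] at hh0
    exact absurd (Option.some.inj hh0) (by decide)
  have hk1 : 0 < cs.length w := by
    unfold CoxeterSystem.IsLeftDescent at h0
    omega
  have hcase : ∀ a b : Fin 2, a ≠ b → (a = 0 ∧ b = 1) ∨ (a = 1 ∧ b = 0) := by decide
  have e0 : (1 - 0 : Fin 2) = 1 := by decide
  have e1 : (1 - 1 : Fin 2) = 0 := by decide
  have hboth : w = cs.wordProd (CoxeterSystem.alternatingWord 0 1 (cs.length w)) ∧
      w = cs.wordProd (CoxeterSystem.alternatingWord 1 0 (cs.length w)) := by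
    rcases hcase i0 i1 hne with ⟨ha, hb⟩ | ⟨ha, hb⟩ <;> subst ha <;> subst hb <;>
      rw [e0] at * <;> rw [e1] at * <;> exact ⟨by assumption, by assumption⟩
  exact keyφ cs _ hk1 (length_le cs w)
    (by rw [← hboth.1, ← hboth.2])

lemma descents_of_length_max {w : W} (h : cs.length w = m + 2) (j : Fin 2) :
    cs.IsLeftDescent w j := by
  obtain ⟨i, hi⟩ := exists_alt cs w
  -- braid relation: w is also the product of the other alternating word
  have hbraid : cs.wordProd (CoxeterSystem.alternatingWord i (1-i) (m+2)) =
      cs.wordProd (CoxeterSystem.alternatingWord (1-i) i (m+2)) := by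
    have := cs.wordProd_braidWord_eq i (1-i)
    unfold CoxeterSystem.braidWord at this
    rw [Mval i (1-i) (by fin_cases i <;> decide), Mval (1-i) i (by fin_cases i <;> decide)] at this
    exact this
  have h2 : ∀ i' : Fin 2, w = cs.wordProd (CoxeterSystem.alternatingWord i' (1-i') (m+2)) := by
    intro i'
    by_cases hii : i' = i
    · rw [hii, ← h]; exact hi
    · have : i' = 1 - i := fin2_ne hii
      rw [this]
      have h1i : 1 - (1-i) = i := by fin_cases i <;> decide
      rw [h1i, ← hbraid, ← h]
      exact hi
  -- find the word whose head is j
  have hhead : ∀ i' : Fin 2, (CoxeterSystem.alternatingWord i' (1-i') (m+2)).head? =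
      some (if Even (m+1) then 1-i' else i') := by
    intro i'
    rw [show m + 2 = (m+1)+1 from rfl, CoxeterSystem.alternatingWord_succ']
    rfl
  have hjj : ∀ b : Fin 2, 1 - (1 - b) = b := by decide
  obtain ⟨i', hji'⟩ : ∃ i' : Fin 2, (if Even (m+1) then 1-i' else i') = j := by
    rcases Nat.even_or_odd (m+1) with he | ho
    · exact ⟨1 - j, by rw [if_pos he, hjj]⟩
    · exact ⟨j, by rw [if_neg (Nat.not_even_iff_odd.mpr ho)]⟩
  have hw' := h2 i'
  have hword : CoxeterSystem.alternatingWord i' (1-i') (m+2) =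
      j :: (CoxeterSystem.alternatingWord i' (1-i') (m+1)) := by
    rw [show m + 2 = (m+1)+1 from rfl, CoxeterSystem.alternatingWord_succ', hji']
  have hred : cs.IsReduced (CoxeterSystem.alternatingWord i' (1-i') (m+2)) := by
    unfold CoxeterSystem.IsReduced
    rw [← hw', CoxeterSystem.length_alternatingWord, h]
  rw [hword] at hred hw'
  exact head_descent cs hred hw'


open scoped Classical in
lemma dval (w : W) : Nat.card {i : Fin 2 // cs.IsLeftDescent w i} =
    if cs.length w = m + 2 then 2 else if w = 1 then 0 else 1 := by
  by_cases hmax : cs.length w = m + 2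
  · rw [if_pos hmax]
    have hall : ∀ i : Fin 2, cs.IsLeftDescent w i := descents_of_length_max cs hmax
    rw [Nat.card_congr (Equiv.subtypeUnivEquiv hall)]
    simp
  · rw [if_neg hmax]
    by_cases h1 : w = 1
    · rw [if_pos h1]
      subst h1
      have : IsEmpty {i : Fin 2 // cs.IsLeftDescent 1 i} :=
        ⟨fun ⟨i, hi⟩ => cs.not_isLeftDescent_one i hi⟩
      simp [Nat.card_of_isEmpty]
    · rw [if_neg h1]
      obtain ⟨j, hj⟩ := cs.exists_leftDescent_of_ne_one h1
      have honly : ∀ i : Fin 2, cs.IsLeftDescent w i ↔ i = j := by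
        intro i
        constructor
        · intro hi
          by_contra hne
          have hcase : ∀ a b : Fin 2, a ≠ b → (a = 0 ∧ b = 1) ∨ (a = 1 ∧ b = 0) := by decide
          rcases hcase i j hne with ⟨ha, hb⟩ | ⟨ha, hb⟩ <;> subst ha <;> subst hb <;>
            exact hmax (two_descent cs (by assumption) (by assumption))
        · intro hi; subst hi; exact hj
      rw [Nat.card_congr (Equiv.subtypeEquivRight honly), Nat.card_eq_fintype_card,
        Fintype.card_subtype_eq]


lemma w0_eq {w : W} (h : cs.length w = m + 2) :
    w = cs.wordProd (CoxeterSystem.alternatingWord 0 1 (m+2)) := by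
  obtain ⟨i, hi⟩ := exists_alt cs w
  rw [h] at hi
  have hcase : ∀ a : Fin 2, a = 0 ∨ a = 1 := by decide
  have e0 : (1 - 0 : Fin 2) = 1 := by decide
  have e1 : (1 - 1 : Fin 2) = 0 := by decide
  rcases hcase i with hi0 | hi1
  · rwa [hi0, e0] at hi
  · rw [hi1, e1] at hi
    have hbraid := cs.wordProd_braidWord_eq 1 0
    unfold CoxeterSystem.braidWord at hbraid
    rw [Mval 1 0 (by decide), Mval 0 1 (by decide)] at hbraid
    rw [hi, hbraid]

/-- the eight candidate elements -/
def g : Fin 8 → W := fun idx =>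
  match idx with
  | 0 => cs.wordProd (CoxeterSystem.alternatingWord 0 1 0)
  | 1 => cs.wordProd (CoxeterSystem.alternatingWord 0 1 1)
  | 2 => cs.wordProd (CoxeterSystem.alternatingWord 1 0 1)
  | 3 => cs.wordProd (CoxeterSystem.alternatingWord 0 1 2)
  | 4 => cs.wordProd (CoxeterSystem.alternatingWord 1 0 2)
  | 5 => cs.wordProd (CoxeterSystem.alternatingWord 0 1 3)
  | 6 => cs.wordProd (CoxeterSystem.alternatingWord 1 0 3)
  | 7 => cs.wordProd (CoxeterSystem.alternatingWord 0 1 (m+2))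

lemma subset_range_g : {w : W | cs.length w ≤ 3 ∨ cs.length w = m + 2} ⊆ Set.range (g cs) := by
  intro w hw
  rcases hw with hle | hmax
  · obtain ⟨i, hi⟩ := exists_alt cs w
    have hcase : ∀ a : Fin 2, a = 0 ∨ a = 1 := by decide
    have e0 : (1 - 0 : Fin 2) = 1 := by decide
    have e1 : (1 - 1 : Fin 2) = 0 := by decide
    set k := cs.length w with hk
    clear_value k
    rcases hcase i with hi0 | hi1 <;> [rw [hi0, e0] at hi; rw [hi1, e1] at hi] <;>
      interval_cases k
    · exact ⟨0, hi.symm⟩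
    · exact ⟨1, hi.symm⟩
    · exact ⟨3, hi.symm⟩
    · exact ⟨5, hi.symm⟩
    · exact ⟨0, by rw [hi]; rfl⟩
    · exact ⟨2, hi.symm⟩
    · exact ⟨4, hi.symm⟩
    · exact ⟨6, hi.symm⟩
  · exact ⟨7, (w0_eq cs hmax).symm⟩

lemma card_le8 : Nat.card {w : W | cs.length w ≤ 3 ∨ cs.length w = m + 2} ≤ 8 := by
  refine (Nat.card_mono (Set.toFinite _) (subset_range_g cs)).trans ?_
  refine (Nat.card_le_card_of_surjective _ Set.rangeFactorization_surjective).trans ?_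
  simp

lemma φ_surj : Function.Surjective (φ cs) := by
  intro x
  have h01 : φ cs (cs.simple 0 * cs.simple 1) = DihedralGroup.r 1 := by
    rw [map_mul, φ_simple, φ_simple, DihedralGroup.sr_mul_sr]
    norm_num
  cases x with
  | r j =>
    refine ⟨(cs.simple 0 * cs.simple 1) ^ j.val, ?_⟩
    rw [map_pow, h01, DihedralGroup.r_one_pow, ZMod.natCast_rightInverse j]
  | sr j =>
    refine ⟨cs.simple 0 * (cs.simple 0 * cs.simple 1) ^ j.val, ?_⟩
    rw [map_mul, map_pow, h01, DihedralGroup.r_one_pow, φ_simple,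
      ZMod.natCast_rightInverse j, DihedralGroup.sr_mul_r]
    norm_num

lemma card_lower [Fintype W] (cs : CoxeterSystem (CoxeterMatrix.I m) W) :
    2 * (m + 2) ≤ Fintype.card W := by
  have h1 := Nat.card_le_card_of_surjective (φ cs) (φ_surj cs)
  rw [DihedralGroup.nat_card, Nat.card_eq_fintype_card] at h1
  exact h1

end Stmt15Aux

/-- In the dihedral Coxeter group `I₂(n)` (`n = m + 2 ≥ 2`; `CoxeterMatrix.I m` is the
Coxeter matrix of the symmetry group of the regular `(m+2)`-gon): the number of left
descents `d w` is `2` if `w = w₀` (the longest element, characterized by `ℓ w = n`),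
`0` if `w = e`, and `1` otherwise; the number of proper elements (those with
`ℓ w ≤ 2 + maxw₀ (d w)`, where `maxw₀ 2 = n`, `maxw₀ 1 = 1`, `maxw₀ 0 = 0`) is at
most `8`; and hence the proportion of proper elements tends to `0` as `n → ∞`. -/
theorem stmt_15 (W : ℕ → Type*) [∀ m, Group (W m)] [∀ m, Fintype (W m)]
    (cs : ∀ m : ℕ, CoxeterSystem (CoxeterMatrix.I m) (W m))
    (d : ∀ m : ℕ, W m → ℕ)
    (hd : ∀ m w, d m w = Nat.card {i : Fin 2 // (cs m).IsLeftDescent w i})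
    (maxw₀ : ℕ → ℕ → ℕ)
    (hmaxw₀ : ∀ m x, maxw₀ m x = if x = 2 then m + 2 else if x = 1 then 1 else 0) :
    (∀ m : ℕ, ∀ w : W m,
      d m w = if (cs m).length w = m + 2 then 2 else if w = 1 then 0 else 1) ∧
    (∀ m : ℕ,
      Nat.card {w : W m | (cs m).length w ≤ 2 + maxw₀ m (d m w)} ≤ 8) ∧
    Tendsto (fun m : ℕ =>
        (Nat.card {w : W m | (cs m).length w ≤ 2 + maxw₀ m (d m w)} : ℝ)
          / Fintype.card (W m))
      atTop (nhds 0) := by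
  have hpart1 : ∀ m : ℕ, ∀ w : W m,
      d m w = if (cs m).length w = m + 2 then 2 else if w = 1 then 0 else 1 := by
    intro m w
    rw [hd]
    exact Stmt15Aux.dval (cs m) w
  have hsub : ∀ m : ℕ, {w : W m | (cs m).length w ≤ 2 + maxw₀ m (d m w)} ⊆
      {w : W m | (cs m).length w ≤ 3 ∨ (cs m).length w = m + 2} := by
    intro m w hw
    simp only [Set.mem_setOf_eq] at hw ⊢
    by_cases hmax : (cs m).length w = m + 2
    · exact Or.inr hmax
    · left
      by_cases h1 : w = 1
      · rw [h1, (cs m).length_one]; omega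
      · have hdw : d m w = 1 := by rw [hpart1 m w, if_neg hmax, if_neg h1]
        rw [hdw, hmaxw₀] at hw
        norm_num at hw
        exact hw
  have hpart2 : ∀ m : ℕ,
      Nat.card {w : W m | (cs m).length w ≤ 2 + maxw₀ m (d m w)} ≤ 8 :=
    fun m => (Nat.card_mono (Set.toFinite _) (hsub m)).trans (Stmt15Aux.card_le8 (cs m))
  refine ⟨hpart1, hpart2, ?_⟩
  have hcard : ∀ m : ℕ, 2 * (m + 2) ≤ Fintype.card (W m) :=
    fun m => Stmt15Aux.card_lower (cs m)
  apply squeeze_zero' (g := fun m : ℕ => (8 : ℝ) / m)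
  · filter_upwards with m
    positivity
  · filter_upwards [eventually_ge_atTop 1] with m hm
    have hc : (m : ℝ) ≤ Fintype.card (W m) := by
      have : m ≤ Fintype.card (W m) := le_trans (by omega) (hcard m)
      exact_mod_cast this
    have hm0 : (0 : ℝ) < m := by exact_mod_cast hm
    have hnum : (Nat.card {w : W m | (cs m).length w ≤ 2 + maxw₀ m (d m w)} : ℝ) ≤ 8 := by
      exact_mod_cast hpart2 m
    exact div_le_div₀ (by norm_num) hnum hm0 hc
  · exact tendsto_const_div_atTop_nhds_zero_nat 8
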